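/- Fix d ≥ 3 and let G be a simple graph. Let G' be the graph obtained from G by adding, for each vertex v of G, a path P_v = (v₁, v₂, …, v_{d−2}) on d − 2 new vertices together with the edge {v, v₁}, where the added paths for distinct vertices of G are pairwise vertex-disjoint and disjoint from V(G). Then for every natural number k, G has a vertex cover of size at most k if and only if G' has a d-path vertex cover of size at most k. -/

import Mathlib

open SimpleGraph

/-- `S` is a `d`-path vertex cover of `G`. -/
def IsPVC {V : Type*} (G : SimpleGraph V) (d : ℕ) (S : Set V) : Prop :=
  ∀ ⦃u v : V⦄ (p : G.Walk u v), p.IsPath → p.length + 1 = d → ∃ x ∈ p.support, x ∈ S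

/-- The graph `G'` obtained from `G` by attaching, to each vertex `u` of `G`, a pendant path
`P_u` on `d − 2` new vertices `(u, 0), (u, 1), …, (u, d−3)` via the edge `{u, (u, 0)}`;
the attached paths are pairwise disjoint and disjoint from `V(G)`. -/
def pendantPathGraph {V : Type*} (G : SimpleGraph V) (d : ℕ) :
    SimpleGraph (V ⊕ V × Fin (d - 2)) :=
  SimpleGraph.fromRel (fun a b =>
    (∃ u w : V, a = Sum.inl u ∧ b = Sum.inl w ∧ G.Adj u w) ∨
    (∃ (u : V) (i : Fin (d - 2)), a = Sum.inl u ∧ b = Sum.inr (u, i) ∧ (i : ℕ) = 0) ∨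
    (∃ (u : V) (i j : Fin (d - 2)), a = Sum.inr (u, i) ∧ b = Sum.inr (u, j) ∧
      (j : ℕ) = (i : ℕ) + 1))

namespace PendantAux

variable {V : Type*} (G : SimpleGraph V) (d : ℕ)

/-- The gadget a vertex of `G'` belongs to. -/
def gd : V ⊕ V × Fin (d - 2) → V := Sum.elim id Prod.fst

lemma adj_cases {a b : V ⊕ V × Fin (d - 2)} (h : (pendantPathGraph G d).Adj a b) :
    (∃ u w : V, a = Sum.inl u ∧ b = Sum.inl w ∧ G.Adj u w) ∨ gd d a = gd d b := by
  rw [pendantPathGraph, fromRel_adj] at h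
  obtain ⟨-, h | h⟩ := h
  · rcases h with ⟨u, w, rfl, rfl, hadj⟩ | ⟨u, i, rfl, rfl, -⟩ | ⟨u, i, j, rfl, rfl, -⟩
    · exact Or.inl ⟨u, w, rfl, rfl, hadj⟩
    · exact Or.inr rfl
    · exact Or.inr rfl
  · rcases h with ⟨u, w, rfl, rfl, hadj⟩ | ⟨u, i, rfl, rfl, -⟩ | ⟨u, i, j, rfl, rfl, -⟩
    · exact Or.inl ⟨w, u, rfl, rfl, hadj.symm⟩
    · exact Or.inr rfl
    · exact Or.inr rfl

lemma g_const {a b : V ⊕ V × Fin (d - 2)} (p : (pendantPathGraph G d).Walk a b)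
    (hno : ∀ u w : V, Sum.inl u ∈ p.support → Sum.inl w ∈ p.support → ¬ G.Adj u w) :
    ∀ x ∈ p.support, gd d x = gd d a := by
  induction p with
  | nil => simp
  | @cons a c b h q ih =>
    intro x hx
    rw [Walk.support_cons, List.mem_cons] at hx
    rcases hx with rfl | hx
    · rfl
    · have hno' : ∀ u w : V, Sum.inl u ∈ q.support → Sum.inl w ∈ q.support → ¬ G.Adj u w := by
        intro u w hu hw
        exact hno u w (by rw [Walk.support_cons]; exact List.mem_cons_of_mem _ hu)
          (by rw [Walk.support_cons]; exact List.mem_cons_of_mem _ hw)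
      have hq := ih hno' x hx
      rcases adj_cases G d h with ⟨u, w, ha, hc, huw⟩ | hg
      · refine absurd huw (hno u w ?_ ?_)
        · rw [Walk.support_cons]
          exact ha ▸ List.mem_cons_self (a := a) (l := q.support)
        · rw [Walk.support_cons]
          exact List.mem_cons_of_mem _ (hc ▸ q.start_mem_support)
      · rw [hq, ← hg]

lemma adj0 (u : V) (i : Fin (d - 2)) (hi : (i : ℕ) = 0) :
    (pendantPathGraph G d).Adj (Sum.inr (u, i)) (Sum.inl u) := by
  rw [pendantPathGraph, fromRel_adj]
  exact ⟨by simp, Or.inr (Or.inr (Or.inl ⟨u, i, rfl, rfl, hi⟩))⟩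

lemma adjSucc (u : V) (i j : Fin (d - 2)) (hij : (j : ℕ) = (i : ℕ) + 1) :
    (pendantPathGraph G d).Adj (Sum.inr (u, j)) (Sum.inr (u, i)) := by
  rw [pendantPathGraph, fromRel_adj]
  refine ⟨?_, Or.inr (Or.inr (Or.inr ⟨u, i, j, rfl, rfl, hij⟩))⟩
  simp only [ne_eq, Sum.inr.injEq, Prod.mk.injEq, true_and]
  intro h; rw [h] at hij; omega

lemma adjG {u w : V} (h : G.Adj u w) :
    (pendantPathGraph G d).Adj (Sum.inl u) (Sum.inl w) := by
  rw [pendantPathGraph, fromRel_adj]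
  exact ⟨by simp [h.ne], Or.inl (Or.inl ⟨u, w, rfl, rfl, h⟩)⟩

/-- The walk down the pendant path from `(u, n)` to `u`. -/
def descend (u : V) : (n : ℕ) → (h : n < d - 2) →
    (pendantPathGraph G d).Walk (Sum.inr (u, ⟨n, h⟩)) (Sum.inl u)
  | 0, h => Walk.cons (adj0 G d u ⟨0, h⟩ rfl) Walk.nil
  | n + 1, h => Walk.cons (adjSucc G d u ⟨n, by omega⟩ ⟨n + 1, h⟩ rfl)
      (descend u n (by omega))

lemma descend_length (u : V) (n : ℕ) (h : n < d - 2) :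
    (descend G d u n h).length = n + 1 := by
  induction n with
  | zero => rfl
  | succ m ih => simp [descend, ih]

lemma mem_descend_support (u : V) (n : ℕ) (h : n < d - 2)
    (x : V ⊕ V × Fin (d - 2)) :
    x ∈ (descend G d u n h).support ↔
      x = Sum.inl u ∨ ∃ i : Fin (d - 2), (i : ℕ) ≤ n ∧ x = Sum.inr (u, i) := by
  induction n with
  | zero =>
    simp only [descend, Walk.support_cons, Walk.support_nil, List.mem_cons,
      List.not_mem_nil, or_false]
    constructor
    · rintro (rfl | rfl)
      · exact Or.inr ⟨⟨0, h⟩, le_refl 0, rfl⟩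
      · exact Or.inl rfl
    · rintro (rfl | ⟨i, hi, rfl⟩)
      · exact Or.inr rfl
      · obtain rfl : i = ⟨0, h⟩ := Fin.ext (by show (i : ℕ) = 0; omega)
        exact Or.inl rfl
  | succ m ih =>
    simp only [descend, Walk.support_cons, List.mem_cons]
    rw [ih (by omega)]
    constructor
    · rintro (rfl | rfl | ⟨i, hi, rfl⟩)
      · exact Or.inr ⟨⟨m + 1, h⟩, le_refl _, rfl⟩
      · exact Or.inl rfl
      · exact Or.inr ⟨i, by omega, rfl⟩
    · rintro (rfl | ⟨i, hi, rfl⟩)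
      · exact Or.inr (Or.inl rfl)
      · rcases Nat.lt_or_ge (i : ℕ) (m + 1) with hlt | hge
        · exact Or.inr (Or.inr ⟨i, by omega, rfl⟩)
        · obtain rfl : i = ⟨m + 1, h⟩ := Fin.ext (by show (i : ℕ) = m + 1; omega)
          exact Or.inl rfl

lemma descend_isPath (u : V) (n : ℕ) (h : n < d - 2) :
    (descend G d u n h).IsPath := by
  induction n with
  | zero =>
    apply Walk.IsPath.cons (Walk.IsPath.nil)
    simp
  | succ m ih =>
    apply Walk.IsPath.cons (ih (by omega))
    rw [mem_descend_support]
    rintro (h1 | ⟨i, hi, h2⟩)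
    · exact absurd h1 (by simp)
    · simp only [Sum.inr.injEq, Prod.mk.injEq, true_and] at h2
      have h3 := congrArg Fin.val h2
      simp at h3
      omega

end PendantAux

open PendantAux in
/-- For `d ≥ 3`, `G` has a vertex cover of size at most `k` iff the graph `G'` obtained by
attaching a pendant `(d−2)`-path to every vertex of `G` has a `d`-path vertex cover of size
at most `k`. -/
theorem vc_iff_pvc_of_pendant_paths {V : Type*} (G : SimpleGraph V) (d : ℕ) (hd : 3 ≤ d)
    (k : ℕ) :
    (∃ S : Finset V, S.card ≤ k ∧ ∀ ⦃u w : V⦄, G.Adj u w → u ∈ S ∨ w ∈ S) ↔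
      (∃ S : Finset (V ⊕ V × Fin (d - 2)), S.card ≤ k ∧ IsPVC (pendantPathGraph G d) d ↑S) := by
  classical
  constructor
  · rintro ⟨S, hSk, hcov⟩
    refine ⟨S.image Sum.inl, (Finset.card_image_le).trans hSk, ?_⟩
    intro a b p hp hlen
    by_contra hno
    push_neg at hno
    have hnoG : ∀ u w : V, Sum.inl u ∈ p.support → Sum.inl w ∈ p.support → ¬ G.Adj u w := by
      intro u w hu hw hadj
      rcases hcov hadj with h | h
      · exact hno _ hu (by simp [Finset.mem_image]; exact h)
      · exact hno _ hw (by simp [Finset.mem_image]; exact h)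
    have hconst := g_const G d p hnoG
    set u0 := gd d a with hu0
    set T : Finset (V ⊕ V × Fin (d - 2)) :=
      insert (Sum.inl u0) ((Finset.univ : Finset (Fin (d - 2))).image
        (fun i => Sum.inr (u0, i))) with hT
    have hsub : p.support.toFinset ⊆ T := by
      intro x hx
      rw [List.mem_toFinset] at hx
      have hg := hconst x hx
      rw [hT]
      cases x with
      | inl v =>
        simp only [gd, Sum.elim_inl, id] at hg
        rw [hg]; exact Finset.mem_insert_self _ _
      | inr z =>
        simp only [gd, Sum.elim_inr] at hg
        apply Finset.mem_insert_of_mem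
        rw [Finset.mem_image]
        exact ⟨z.2, Finset.mem_univ _, by rw [← hg]⟩
    have hTcard : T.card ≤ d - 1 := by
      rw [hT]
      calc _ ≤ ((Finset.univ : Finset (Fin (d - 2))).image
            (fun i => Sum.inr (u0, i) : Fin (d-2) → V ⊕ V × Fin (d - 2))).card + 1 :=
          Finset.card_insert_le _ _
        _ ≤ (d - 2) + 1 := by
            have := Finset.card_image_le (s := (Finset.univ : Finset (Fin (d - 2))))
              (f := (fun i => Sum.inr (u0, i) : Fin (d-2) → V ⊕ V × Fin (d - 2)))
            simpa using this
        _ ≤ d - 1 := by omega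
    have hcard : p.support.toFinset.card = d := by
      rw [List.toFinset_card_of_nodup hp.support_nodup, Walk.length_support, hlen]
    have := Finset.card_le_card hsub
    omega
  · rintro ⟨S', hSk, hpvc⟩
    refine ⟨S'.image (gd d), (Finset.card_image_le).trans hSk, ?_⟩
    intro u w huw
    by_contra hno
    push_neg at hno
    obtain ⟨hu, hw⟩ := hno
    have h2 : d - 3 < d - 2 := by omega
    let p0 := descend G d u (d - 3) h2
    let p := p0.append (Walk.cons (adjG G d huw) Walk.nil)
    have hlen : p.length + 1 = d := by
      have := descend_length G d u (d - 3) h2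
      simp only [p, p0, Walk.length_append, Walk.length_cons, Walk.length_nil, this]
      omega
    have hwmem : Sum.inl w ∉ p0.support := by
      rw [mem_descend_support]
      rintro (h1 | ⟨i, hi, h2'⟩)
      · exact huw.ne' (by injection h1)
      · exact absurd h2' (by simp)
    have hpath : p.IsPath := by
      rw [Walk.isPath_def, Walk.support_append]
      simp only [Walk.support_cons, Walk.support_nil, List.tail_cons]
      rw [List.nodup_append]
      refine ⟨(descend_isPath G d u (d - 3) h2).support_nodup, List.nodup_singleton _, ?_⟩
      intro x hx y hy hxy
      rw [List.mem_singleton] at hy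
      subst hy
      exact hwmem (hxy ▸ hx)
    obtain ⟨x, hxsup, hxS⟩ := hpvc p hpath hlen
    rw [Walk.support_append] at hxsup
    simp only [Walk.support_cons, Walk.support_nil, List.tail_cons, List.mem_append,
      List.mem_singleton] at hxsup
    rw [Finset.mem_coe] at hxS
    rcases hxsup with hx | rfl
    · rw [mem_descend_support] at hx
      apply hu
      rw [Finset.mem_image]
      refine ⟨x, hxS, ?_⟩
      rcases hx with rfl | ⟨i, hi, rfl⟩
      · rfl
      · rfl
    · exact hw (Finset.mem_image.mpr ⟨_, hxS, rfl⟩)
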